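/- arXiv:2508.09760 — 7 statements merged into one kernel-verified Lean document; each statement's English description precedes it below -/
import Mathlib

section
/- Define H(x) = the value at time T of the solution of the piecewise system u'=-d₁u on (0,τ₁], u'=u(1-u) on (τ₁,τ₂], u'=u(1-u)-c₁u on (τ₂,T], starting from u(0)=x>0, with c₁≠1. Then lim_{x→0⁺} H(x)/x = e^{c₁(τ₂ - τ₂*)}, where τ₂* = ((d₁+1)τ₁ + (c₁-1)T)/c₁. -/
open Real Set Filter


lemma exp_comp_le (u f : ℝ → ℝ) (K a b : ℝ) (hab : a ≤ b)
    (hu : ∀ t ∈ Icc a b, HasDerivWithinAt u (f t) (Icc a b) t)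
    (hf : ∀ t ∈ Icc a b, f t ≤ K * u t) :
    u b ≤ u a * Real.exp (K * (b - a)) := by
  set g : ℝ → ℝ := fun t => u t * Real.exp (-K * t) with hg
  have hcont : ContinuousOn u (Icc a b) := fun t ht => (hu t ht).continuousWithinAt
  have hgd : ∀ t ∈ Ioo a b,
      HasDerivAt g (f t * Real.exp (-K * t) + u t * (-K * Real.exp (-K * t))) t := by
    intro t ht
    have h1 : HasDerivAt u (f t) t :=
      (hu t (Ioo_subset_Icc_self ht)).hasDerivAt (Icc_mem_nhds ht.1 ht.2)
    have h2 : HasDerivAt (fun s => Real.exp (-K * s)) (-K * Real.exp (-K * t)) t := by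
      have := ((hasDerivAt_id t).const_mul (-K)).exp
      simpa [mul_comm] using this
    exact h1.mul h2
  have hanti : AntitoneOn g (Icc a b) := by
    apply antitoneOn_of_deriv_nonpos (convex_Icc a b)
    · exact hcont.mul ((Real.continuous_exp.comp (continuous_const.mul continuous_id)).continuousOn)
    · rw [interior_Icc]; exact fun t ht => (hgd t ht).differentiableAt.differentiableWithinAt
    · rw [interior_Icc]; intro t ht
      rw [(hgd t ht).deriv]
      have h := hf t (Ioo_subset_Icc_self ht)
      have hexp := Real.exp_pos (-K * t)
      nlinarith
  have hba : g b ≤ g a := hanti (left_mem_Icc.2 hab) (right_mem_Icc.2 hab) hab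
  have key := mul_le_mul_of_nonneg_right hba (Real.exp_nonneg (K * b))
  simp only [hg] at key
  rw [mul_assoc, mul_assoc, ← Real.exp_add, ← Real.exp_add] at key
  have e1 : -K * b + K * b = 0 := by ring
  have e2 : -K * a + K * b = K * (b - a) := by ring
  rw [e1, e2, Real.exp_zero, mul_one] at key
  exact key

lemma exp_comp_ge (u f : ℝ → ℝ) (K a b : ℝ) (hab : a ≤ b)
    (hu : ∀ t ∈ Icc a b, HasDerivWithinAt u (f t) (Icc a b) t)
    (hf : ∀ t ∈ Icc a b, K * u t ≤ f t) :
    u a * Real.exp (K * (b - a)) ≤ u b := by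
  have := exp_comp_le (fun t => -u t) (fun t => -f t) K a b hab
    (fun t ht => (hu t ht).neg)
    (fun t ht => by have := hf t ht; simp only [mul_neg]; linarith)
  simp only [neg_mul] at this
  linarith [this]

lemma exp_mul3 (x a b c : ℝ) :
    x * Real.exp a * Real.exp b * Real.exp c = x * Real.exp (a + b + c) := by
  rw [mul_assoc, mul_assoc, ← Real.exp_add, ← Real.exp_add, add_assoc]

/-- For H(x) the time-T map of the piecewise system u'=-d₁u on (0,τ₁],
u'=u(1-u) on (τ₁,τ₂], u'=u(1-u)-c₁u on (τ₂,T], with c₁ ≠ 1,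
lim_{x→0⁺} H(x)/x = e^{c₁(τ₂-τ₂*)} with τ₂* = ((d₁+1)τ₁+(c₁-1)T)/c₁. -/
theorem stmt_4 (d₁ c₁ τ₁ τ₂ T : ℝ) (hd : 0 < d₁) (hc : 0 < c₁) (hc1 : c₁ ≠ 1)
    (hτ₁ : 0 < τ₁) (hτ₁₂ : τ₁ ≤ τ₂) (hτ₂T : τ₂ ≤ T)
    (H : ℝ → ℝ)
    (hH : ∀ x, 0 < x → ∃ u : ℝ → ℝ,
      u 0 = x ∧ (∀ t ∈ Icc (0:ℝ) T, 0 < u t) ∧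
      (∀ t ∈ Icc (0:ℝ) τ₁, HasDerivWithinAt u (-d₁ * u t) (Icc (0:ℝ) τ₁) t) ∧
      (∀ t ∈ Icc τ₁ τ₂, HasDerivWithinAt u (u t * (1 - u t)) (Icc τ₁ τ₂) t) ∧
      (∀ t ∈ Icc τ₂ T, HasDerivWithinAt u (u t * (1 - u t) - c₁ * u t) (Icc τ₂ T) t) ∧
      H x = u T) :
    Tendsto (fun x => H x / x) (nhdsWithin 0 (Ioi 0))
      (nhds (Real.exp (c₁ * (τ₂ - ((d₁ + 1) * τ₁ + (c₁ - 1) * T) / c₁)))) := by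
  set E : ℝ := c₁ * (τ₂ - ((d₁ + 1) * τ₁ + (c₁ - 1) * T) / c₁) with hEdef
  have hE : E = -d₁ * τ₁ + (τ₂ - τ₁) + (1 - c₁) * (T - τ₂) := by
    rw [hEdef, mul_sub, ← mul_div_assoc, mul_div_cancel_left₀ _ hc.ne']; ring
  set C : ℝ := Real.exp (τ₂ - τ₁) * Real.exp (|1 - c₁| * (T - τ₂)) with hCdef
  have hC : 0 < C := mul_pos (Real.exp_pos _) (Real.exp_pos _)
  have hτ₁T : τ₁ ≤ T := hτ₁₂.trans hτ₂T
  have key : ∀ x : ℝ, 0 < x →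
      x * Real.exp (E - x * C * (T - τ₁)) ≤ H x ∧ H x ≤ x * Real.exp E := by
    intro x hx
    obtain ⟨u, h0, hpos, h1, h2, h3, hHx⟩ := hH x hx
    -- piece 1 : exact
    have hA : u τ₁ = x * Real.exp (-d₁ * τ₁) := by
      have hle := exp_comp_le u (fun t => -d₁ * u t) (-d₁) 0 τ₁ hτ₁.le h1
        (fun t _ => le_refl _)
      have hge := exp_comp_ge u (fun t => -d₁ * u t) (-d₁) 0 τ₁ hτ₁.le h1
        (fun t _ => le_refl _)
      simp only [h0, sub_zero] at hle hge
      linarith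
    -- piece 2 pointwise upper bound
    have hB : ∀ t ∈ Icc τ₁ τ₂, u t ≤ u τ₁ * Real.exp (t - τ₁) := by
      intro t ht
      have := exp_comp_le u (fun s => u s * (1 - u s)) 1 τ₁ t ht.1
        (fun s hs => (h2 s ⟨hs.1, hs.2.trans ht.2⟩).mono (Icc_subset_Icc_right ht.2))
        (fun s _ => by nlinarith [sq_nonneg (u s)])
      simpa using this
    have he1 : Real.exp (-d₁ * τ₁) ≤ 1 := Real.exp_le_one_iff.2 (by nlinarith)
    have hone : (1:ℝ) ≤ Real.exp (|1 - c₁| * (T - τ₂)) :=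
      Real.one_le_exp (mul_nonneg (abs_nonneg _) (by linarith))
    have hB2 : u τ₂ ≤ x * Real.exp (τ₂ - τ₁) := by
      calc u τ₂ ≤ u τ₁ * Real.exp (τ₂ - τ₁) := hB τ₂ ⟨hτ₁₂, le_refl _⟩
        _ = x * Real.exp (-d₁ * τ₁) * Real.exp (τ₂ - τ₁) := by rw [hA]
        _ ≤ x * 1 * Real.exp (τ₂ - τ₁) := by
            apply mul_le_mul_of_nonneg_right _ (Real.exp_nonneg _)
            exact mul_le_mul_of_nonneg_left he1 hx.le
        _ = x * Real.exp (τ₂ - τ₁) := by ring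
    have hB' : ∀ t ∈ Icc τ₁ τ₂, u t ≤ x * C := by
      intro t ht
      calc u t ≤ u τ₁ * Real.exp (t - τ₁) := hB t ht
        _ = x * Real.exp (-d₁ * τ₁) * Real.exp (t - τ₁) := by rw [hA]
        _ ≤ x * 1 * Real.exp (τ₂ - τ₁) := by
            apply mul_le_mul (mul_le_mul_of_nonneg_left he1 hx.le)
              (Real.exp_le_exp.2 (by linarith [ht.2])) (Real.exp_nonneg _)
              (by positivity)
        _ = (x * Real.exp (τ₂ - τ₁)) * 1 := by ring
        _ ≤ (x * Real.exp (τ₂ - τ₁)) * Real.exp (|1 - c₁| * (T - τ₂)) := by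
            apply mul_le_mul_of_nonneg_left hone (by positivity)
        _ = x * C := by rw [hCdef]; ring
    -- piece 3 pointwise upper bound
    have hCu : ∀ t ∈ Icc τ₂ T, u t ≤ u τ₂ * Real.exp ((1 - c₁) * (t - τ₂)) := by
      intro t ht
      exact exp_comp_le u (fun s => u s * (1 - u s) - c₁ * u s) (1 - c₁) τ₂ t ht.1
        (fun s hs => (h3 s ⟨hs.1, hs.2.trans ht.2⟩).mono (Icc_subset_Icc_right ht.2))
        (fun s _ => by nlinarith [sq_nonneg (u s)])
    have hC' : ∀ t ∈ Icc τ₂ T, u t ≤ x * C := by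
      intro t ht
      have e3 : Real.exp ((1 - c₁) * (t - τ₂)) ≤ Real.exp (|1 - c₁| * (T - τ₂)) := by
        apply Real.exp_le_exp.2
        have h4 := le_abs_self (1 - c₁)
        have h5 := abs_nonneg (1 - c₁)
        nlinarith [ht.1, ht.2]
      have hu2pos : 0 < u τ₂ := hpos τ₂ ⟨hτ₁.le.trans hτ₁₂, hτ₂T⟩
      calc u t ≤ u τ₂ * Real.exp ((1 - c₁) * (t - τ₂)) := hCu t ht
        _ ≤ (x * Real.exp (τ₂ - τ₁)) * Real.exp (|1 - c₁| * (T - τ₂)) :=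
            mul_le_mul hB2 e3 (Real.exp_nonneg _) (by positivity)
        _ = x * C := by rw [hCdef]; ring
    -- upper bound on H x
    have hupper : H x ≤ x * Real.exp E := by
      have s3 : u T ≤ u τ₂ * Real.exp ((1 - c₁) * (T - τ₂)) := hCu T ⟨hτ₂T, le_refl _⟩
      rw [hHx]
      calc u T ≤ u τ₂ * Real.exp ((1 - c₁) * (T - τ₂)) := s3
        _ ≤ (u τ₁ * Real.exp (τ₂ - τ₁)) * Real.exp ((1 - c₁) * (T - τ₂)) :=
            mul_le_mul_of_nonneg_right (hB τ₂ ⟨hτ₁₂, le_refl _⟩) (Real.exp_nonneg _)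
        _ = x * Real.exp (-d₁ * τ₁) * Real.exp (τ₂ - τ₁) * Real.exp ((1 - c₁) * (T - τ₂)) := by
            rw [hA]
        _ = x * Real.exp E := by rw [exp_mul3, hE]
    -- lower bound on H x
    have hlower : x * Real.exp (E - x * C * (T - τ₁)) ≤ H x := by
      have s2 : u τ₁ * Real.exp ((1 - x * C) * (τ₂ - τ₁)) ≤ u τ₂ := by
        apply exp_comp_ge u (fun s => u s * (1 - u s)) (1 - x * C) τ₁ τ₂ hτ₁₂ h2
        intro s hs
        have hus : 0 < u s := hpos s ⟨hτ₁.le.trans hs.1, hs.2.trans hτ₂T⟩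
        have := hB' s hs
        nlinarith
      have s3 : u τ₂ * Real.exp ((1 - c₁ - x * C) * (T - τ₂)) ≤ u T := by
        apply exp_comp_ge u (fun s => u s * (1 - u s) - c₁ * u s) (1 - c₁ - x * C) τ₂ T hτ₂T h3
        intro s hs
        have hus : 0 < u s := hpos s ⟨hτ₁.le.trans (hτ₁₂.trans hs.1), hs.2⟩
        have := hC' s hs
        nlinarith
      rw [hHx]
      calc x * Real.exp (E - x * C * (T - τ₁))
          = x * Real.exp (-d₁ * τ₁) * Real.exp ((1 - x * C) * (τ₂ - τ₁))
              * Real.exp ((1 - c₁ - x * C) * (T - τ₂)) := by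
            rw [exp_mul3]
            congr 1
            rw [hE]; ring
        _ = (u τ₁ * Real.exp ((1 - x * C) * (τ₂ - τ₁))) * Real.exp ((1 - c₁ - x * C) * (T - τ₂)) := by
            rw [hA]
        _ ≤ u τ₂ * Real.exp ((1 - c₁ - x * C) * (T - τ₂)) :=
            mul_le_mul_of_nonneg_right s2 (Real.exp_nonneg _)
        _ ≤ u T := s3
    exact ⟨hlower, hupper⟩
  -- squeeze
  have hgl : Tendsto (fun x : ℝ => Real.exp (E - x * C * (T - τ₁)))
      (nhdsWithin 0 (Ioi 0)) (nhds (Real.exp E)) := by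
    have hcont : Continuous (fun x : ℝ => Real.exp (E - x * C * (T - τ₁))) :=
      Real.continuous_exp.comp
        (continuous_const.sub ((continuous_id.mul continuous_const).mul continuous_const))
    have h := hcont.tendsto 0
    have h' : E - 0 * C * (T - τ₁) = E := by ring
    rw [h'] at h
    exact h.mono_left nhdsWithin_le_nhds
  have hgu : Tendsto (fun _ : ℝ => Real.exp E) (nhdsWithin 0 (Ioi 0)) (nhds (Real.exp E)) :=
    tendsto_const_nhds
  refine tendsto_of_tendsto_of_tendsto_of_le_of_le' hgl hgu ?_ ?_
  · filter_upwards [self_mem_nhdsWithin] with x hx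
    have hx' : 0 < x := hx
    have := (key x hx').1
    rw [le_div_iff₀ hx']
    linarith
  · filter_upwards [self_mem_nhdsWithin] with x hx
    have hx' : 0 < x := hx
    have := (key x hx').2
    rw [div_le_iff₀ hx']
    linarith
end

section
/- For the piecewise-defined Poincaré map H (time-T map of the system u'=-d₁u on dry season, u'=u(1-u) on growth season, u'=u(1-u)-c₁u on grazing season), if the initial value x ≥ 1 then H(x) < x. -/
open Real Set

lemma myconst (g : ℝ → ℝ) (s t : ℝ) (hst : s ≤ t)
    (h : ∀ r ∈ Icc s t, HasDerivWithinAt g 0 (Icc s t) r) : g t = g s := by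
  have hcont : ContinuousOn g (Icc s t) := fun r hr => (h r hr).continuousWithinAt
  exact constant_of_has_deriv_right_zero hcont
    (fun r hr => (h r (Ico_subset_Icc_self hr)).mono_of_mem_nhdsWithin
      (Icc_mem_nhdsGE_of_mem hr)) t (right_mem_Icc.2 hst)

/-- Exact solution formula for the logistic-type equation u' = u (a - u). -/
lemma logistic_formula (a s t : ℝ) (ha0 : a ≠ 0) (hst : s ≤ t) (u : ℝ → ℝ)
    (hpos : ∀ r ∈ Icc s t, 0 < u r)
    (hderiv : ∀ r ∈ Icc s t, HasDerivWithinAt u (u r * (a - u r)) (Icc s t) r) :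
    1 / u t - 1 / a = (1 / u s - 1 / a) * exp (a * (s - t)) := by
  set g : ℝ → ℝ := fun r => (1 / u r - 1 / a) * exp (a * r) with hg
  have hgc : g t = g s := by
    apply myconst g s t hst
    intro r hr
    have hur := (hpos r hr).ne'
    have h1 : HasDerivWithinAt (fun y => (u y)⁻¹ - 1/a)
        (-(u r * (a - u r)) / u r ^ 2) (Icc s t) r :=
      ((hderiv r hr).inv hur).sub_const _
    have h2 : HasDerivAt (fun y => exp (a * y)) (a * exp (a * r)) r := by
      have := (Real.hasDerivAt_exp (a * r)).comp r ((hasDerivAt_id r).const_mul a)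
      simpa [mul_comm, Function.comp_def] using this
    have h3 := h1.mul (h2.hasDerivWithinAt)
    have he : (-(u r * (a - u r)) / u r ^ 2) * exp (a * r)
        + ((u r)⁻¹ - 1/a) * (a * exp (a * r)) = 0 := by
      field_simp [ha0]
      ring
    have : HasDerivWithinAt (fun y => ((u y)⁻¹ - 1/a) * exp (a * y)) 0 (Icc s t) r := by
      rw [← he]; exact h3
    simpa [hg, one_div] using this
  have hs := (hpos s (left_mem_Icc.2 hst)).ne'
  have ht := (hpos t (right_mem_Icc.2 hst)).ne'
  have hexp : exp (a * t) ≠ 0 := (exp_pos _).ne'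
  have : (1 / u t - 1 / a) * exp (a * t) = (1 / u s - 1 / a) * exp (a * s) := hgc
  have key : exp (a * s) = exp (a * (s - t)) * exp (a * t) := by
    rw [← Real.exp_add]; ring_nf
  rw [key, ← mul_assoc] at this
  exact mul_right_cancel₀ hexp this

/-- For u' = u (a - u) with a > 0 one has u t ≤ u s or u t < a. -/
lemma logistic_bound (a s t : ℝ) (ha : 0 < a) (hst : s ≤ t) (u : ℝ → ℝ)
    (hpos : ∀ r ∈ Icc s t, 0 < u r)
    (hderiv : ∀ r ∈ Icc s t, HasDerivWithinAt u (u r * (a - u r)) (Icc s t) r) :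
    u t ≤ u s ∨ u t < a := by
  have hF := logistic_formula a s t ha.ne' hst u hpos hderiv
  have hus := hpos s (left_mem_Icc.2 hst)
  have hut := hpos t (right_mem_Icc.2 hst)
  have hexp : 0 < exp (a * (s - t)) := exp_pos _
  have hexple : exp (a * (s - t)) ≤ 1 := by
    apply exp_le_one_iff.mpr
    nlinarith
  by_cases h : u s < a
  · right
    have h1 : 0 < 1 / u s - 1 / a := by
      rw [sub_pos, div_lt_div_iff₀ ha hus]
      linarith
    have h2 : 0 < 1 / u t - 1 / a := by rw [hF]; positivity
    have h3 : 1 / a < 1 / u t := by linarith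
    rw [div_lt_div_iff₀ ha hut] at h3
    linarith
  · left
    push_neg at h
    have h1 : 1 / u s - 1 / a ≤ 0 := by
      rw [sub_nonpos, div_le_div_iff₀ hus ha]
      linarith
    have h2 : 1 / u s - 1 / a ≤ 1 / u t - 1 / a := by
      rw [hF]
      nlinarith
    have h3 : 1 / u s ≤ 1 / u t := by linarith
    rw [div_le_div_iff₀ hus hut] at h3
    linarith

/-- Exact solution for u' = -d u. -/
lemma exp_decay (d s t : ℝ) (hst : s ≤ t) (u : ℝ → ℝ)
    (hderiv : ∀ r ∈ Icc s t, HasDerivWithinAt u (-d * u r) (Icc s t) r) :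
    u t = u s * exp (-d * (t - s)) := by
  have hgc : u t * exp (d * t) = u s * exp (d * s) := by
    apply myconst (fun r => u r * exp (d * r)) s t hst
    intro r hr
    have h2 : HasDerivAt (fun y => exp (d * y)) (d * exp (d * r)) r := by
      have := (Real.hasDerivAt_exp (d * r)).comp r ((hasDerivAt_id r).const_mul d)
      simpa [mul_comm, Function.comp_def] using this
    have h3 := (hderiv r hr).mul h2.hasDerivWithinAt
    have he : (-d * u r) * exp (d * r) + u r * (d * exp (d * r)) = 0 := by ring
    rw [← he]; exact h3
  have hexp : exp (d * t) ≠ 0 := (exp_pos _).ne'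
  have key : exp (d * s) = exp (-d * (t - s)) * exp (d * t) := by
    rw [← Real.exp_add]; ring_nf
  rw [key, ← mul_assoc] at hgc
  exact mul_right_cancel₀ hexp hgc

/-- If the initial value x ≥ 1, then the time-T map of the three-season single
species system satisfies H(x) < x. -/
theorem stmt_6 (d₁ c₁ τ₁ τ₂ T : ℝ) (hd : 0 < d₁) (hc : 0 < c₁)
    (hτ₁ : 0 < τ₁) (hτ₁₂ : τ₁ < τ₂) (hτ₂T : τ₂ ≤ T)
    (x : ℝ) (hx : 1 ≤ x) (u : ℝ → ℝ) (h0 : u 0 = x)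
    (hpos : ∀ t ∈ Icc (0:ℝ) T, 0 < u t)
    (hu1 : ∀ t ∈ Icc (0:ℝ) τ₁, HasDerivWithinAt u (-d₁ * u t) (Icc (0:ℝ) τ₁) t)
    (hu2 : ∀ t ∈ Icc τ₁ τ₂, HasDerivWithinAt u (u t * (1 - u t)) (Icc τ₁ τ₂) t)
    (hu3 : ∀ t ∈ Icc τ₂ T, HasDerivWithinAt u (u t * (1 - u t) - c₁ * u t) (Icc τ₂ T) t) :
    u T < x := by
  have h01 : (0:ℝ) ≤ τ₁ := hτ₁.le
  have h12 : τ₁ ≤ τ₂ := hτ₁₂.le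
  have h1T : Icc τ₁ τ₂ ⊆ Icc (0:ℝ) T := Icc_subset_Icc h01 hτ₂T
  have h2T : Icc τ₂ T ⊆ Icc (0:ℝ) T := Icc_subset_Icc (le_trans h01 h12) le_rfl
  -- Phase 1: u τ₁ < x
  have hp1 : u τ₁ < x := by
    have := exp_decay d₁ 0 τ₁ h01 u hu1
    rw [h0] at this
    rw [this]
    have hexp : exp (-d₁ * (τ₁ - 0)) < 1 := by
      apply exp_lt_one_iff.mpr
      nlinarith
    nlinarith [exp_pos (-d₁ * (τ₁ - 0))]
  -- Phase 2: u τ₂ < x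
  have hp2 : u τ₂ < x := by
    have hb := logistic_bound 1 τ₁ τ₂ one_pos h12 u (fun r hr => hpos r (h1T hr))
      (fun r hr => hu2 r hr)
    rcases hb with h | h
    · linarith
    · linarith
  -- Phase 3: u T < x
  have hp3 : u T < x := by
    by_cases ha : 1 - c₁ ≤ 0
    · -- u' < 0 on [τ₂, T]; use antitonicity
      have hanti : AntitoneOn u (Icc τ₂ T) := by
        apply antitoneOn_of_deriv_nonpos (convex_Icc τ₂ T)
        · exact fun r hr => (hu3 r hr).continuousWithinAt
        · intro r hr
          rw [interior_Icc] at hr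
          exact ((hu3 r (Ioo_subset_Icc_self hr)).hasDerivAt
            (Icc_mem_nhds hr.1 hr.2)).differentiableAt.differentiableWithinAt
        · intro r hr
          rw [interior_Icc] at hr
          have hrm : r ∈ Icc τ₂ T := Ioo_subset_Icc_self hr
          have hda : HasDerivAt u (u r * (1 - u r) - c₁ * u r) r :=
            (hu3 r hrm).hasDerivAt (Icc_mem_nhds hr.1 hr.2)
          rw [hda.deriv]
          have hur := hpos r (h2T hrm)
          nlinarith
      calc u T ≤ u τ₂ := hanti (left_mem_Icc.2 hτ₂T) (right_mem_Icc.2 hτ₂T) hτ₂T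
        _ < x := hp2
    · push_neg at ha
      have hb := logistic_bound (1 - c₁) τ₂ T ha hτ₂T u (fun r hr => hpos r (h2T hr))
        (fun r hr => by
          have := hu3 r hr
          have he : u r * (1 - u r) - c₁ * u r = u r * ((1 - c₁) - u r) := by ring
          rwa [he] at this)
      rcases hb with h | h
      · linarith
      · linarith
  exact hp3
end

section
/- In the case c₁ = 1: with m₁ = e^{-d₁τ₁} and m₂ = e^{τ₂-τ₁}, the full Poincaré map is H(x) = m₁m₂x / (m₁m₂(T-τ₂)x + m₁(m₂-1)x + 1) for x ∈ (0,1). Consequently, if m₁m₂ ≤ 1 (i.e. τ₂ ≤ (d₁+1)τ₁), then H(x) < x for all x ∈ (0,1). -/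
open Real Set

lemma icc_mem_nhdsWithin_Ici' {a b t : ℝ} (ht : t ∈ Ico a b) : Icc a b ∈ nhdsWithin t (Ici t) :=
  mem_nhdsWithin.mpr ⟨Iio b, isOpen_Iio, ht.2,
    fun y hy => ⟨le_trans ht.1 hy.2, le_of_lt hy.1⟩⟩

/-- General Riccati-type uniqueness: if `u' = u (α - β u)` on `[a,b]`, `u a = c`,
and `ρ` satisfies `ρ a = 1`, `ρ' = β c e^{α (t-a)}`, then `u t · ρ t = c e^{α(t-a)}`. -/
lemma riccati_solve {u ρ : ℝ → ℝ} {a b α β c : ℝ} (hab : a ≤ b)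
    (hu : ∀ t ∈ Icc a b, HasDerivWithinAt u (u t * (α - β * u t)) (Icc a b) t)
    (hua : u a = c) (hρa : ρ a = 1)
    (hρ : ∀ t, HasDerivAt ρ (β * c * Real.exp (α * (t - a))) t) :
    ∀ t ∈ Icc a b, u t * ρ t = c * Real.exp (α * (t - a)) := by
  have hucont : ContinuousOn u (Icc a b) := fun t ht => (hu t ht).continuousWithinAt
  -- bound for the linear coefficient
  obtain ⟨K, hK⟩ : ∃ K, ∀ t ∈ Icc a b, ‖α - β * u t‖ ≤ K := by
    have hc : ContinuousOn (fun t => α - β * u t) (Icc a b) :=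
      (continuousOn_const.sub (continuousOn_const.mul hucont))
    exact isCompact_Icc.exists_bound_of_continuousOn hc
  set g : ℝ → ℝ := fun t => u t * ρ t - c * Real.exp (α * (t - a)) with hg_def
  have hg' : ∀ t ∈ Icc a b, HasDerivWithinAt g ((α - β * u t) * g t) (Icc a b) t := by
    intro t ht
    have h1 : HasDerivWithinAt (fun t => u t * ρ t)
        (u t * (α - β * u t) * ρ t + u t * (β * c * Real.exp (α * (t - a)))) (Icc a b) t := by
      exact (hu t ht).mul ((hρ t).hasDerivWithinAt)
    have h2 : HasDerivAt (fun t : ℝ => c * Real.exp (α * (t - a)))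
        (c * (Real.exp (α * (t - a)) * α)) t := by
      have hinner : HasDerivAt (fun t : ℝ => α * (t - a)) α t := by
        simpa using ((hasDerivAt_id t).sub_const a).const_mul α
      exact (hinner.exp).const_mul c
    have h3 := h1.sub h2.hasDerivWithinAt
    refine h3.congr_deriv ?_
    simp only [hg_def]; ring
  have hgcont : ContinuousOn g (Icc a b) := fun t ht => (hg' t ht).continuousWithinAt
  have hga : g a = 0 := by simp [hg_def, hua, hρa]
  have hbound : ∀ t ∈ Icc a b, ‖g t‖ ≤ gronwallBound 0 K 0 (t - a) := by
    apply norm_le_gronwallBound_of_norm_deriv_right_le hgcont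
    · intro t ht
      exact (hg' t (Ico_subset_Icc_self ht)).mono_of_mem_nhdsWithin (icc_mem_nhdsWithin_Ici' ht)
    · simp [hga]
    · intro t ht
      have := hK t (Ico_subset_Icc_self ht)
      calc ‖(α - β * u t) * g t‖ = ‖α - β * u t‖ * ‖g t‖ := norm_mul _ _
        _ ≤ K * ‖g t‖ := by
            apply mul_le_mul_of_nonneg_right this (norm_nonneg _)
        _ ≤ K * ‖g t‖ + 0 := by ring_nf; rfl
  intro t ht
  have := hbound t ht
  rw [gronwallBound_ε0] at this
  simp only [zero_mul, norm_le_zero_iff] at this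
  have : g t = 0 := this
  simpa [hg_def, sub_eq_zero] using this

/-- In the case c₁ = 1, with m₁ = e^{-d₁τ₁} and m₂ = e^{τ₂-τ₁}, the full Poincaré
map satisfies H(x) = m₁m₂x/(m₁m₂(T-τ₂)x + m₁(m₂-1)x + 1) for x ∈ (0,1); consequently
if m₁m₂ ≤ 1 then H(x) < x. -/
theorem stmt_11 (d₁ τ₁ τ₂ T x : ℝ) (hd : 0 < d₁) (hτ₁ : 0 < τ₁) (hτ₁₂ : τ₁ < τ₂)
    (hτ₂T : τ₂ ≤ T) (hx : x ∈ Ioo (0:ℝ) 1) (u : ℝ → ℝ) (h0 : u 0 = x)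
    (hu1 : ∀ t ∈ Icc (0:ℝ) τ₁, HasDerivWithinAt u (-d₁ * u t) (Icc (0:ℝ) τ₁) t)
    (hu2 : ∀ t ∈ Icc τ₁ τ₂, HasDerivWithinAt u (u t * (1 - u t)) (Icc τ₁ τ₂) t)
    (hu3 : ∀ t ∈ Icc τ₂ T, HasDerivWithinAt u (-(u t) ^ 2) (Icc τ₂ T) t) :
    u T = Real.exp (-d₁ * τ₁) * Real.exp (τ₂ - τ₁) * x /
        (Real.exp (-d₁ * τ₁) * Real.exp (τ₂ - τ₁) * (T - τ₂) * x +
          Real.exp (-d₁ * τ₁) * (Real.exp (τ₂ - τ₁) - 1) * x + 1) ∧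
      (Real.exp (-d₁ * τ₁) * Real.exp (τ₂ - τ₁) ≤ 1 → u T < x) := by
  obtain ⟨hx0, hx1⟩ := hx
  set m₁ := Real.exp (-d₁ * τ₁) with hm₁
  set m₂ := Real.exp (τ₂ - τ₁) with hm₂
  have hm₁pos : 0 < m₁ := Real.exp_pos _
  have hm₁lt : m₁ < 1 := by
    rw [hm₁, Real.exp_lt_one_iff]
    nlinarith
  have hm₂gt : 1 < m₂ := by
    rw [hm₂]
    have : 0 < τ₂ - τ₁ := by linarith
    calc (1:ℝ) = Real.exp 0 := (Real.exp_zero).symm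
      _ < Real.exp (τ₂ - τ₁) := Real.exp_lt_exp.mpr this
  -- Piece 1 : u' = -d₁ u on [0, τ₁]
  have hstep1 : u τ₁ = m₁ * x := by
    have := riccati_solve (u := u) (ρ := fun _ => 1) (a := 0) (b := τ₁) (α := -d₁) (β := 0)
      (c := x) hτ₁.le
      (fun t ht => by convert hu1 t ht using 1; ring) h0 rfl
      (fun t => by simpa using (hasDerivAt_const t (1:ℝ)))
      τ₁ (right_mem_Icc.mpr hτ₁.le)
    simpa [hm₁, mul_comm] using this
  set A := m₁ * x with hA
  have hA0 : 0 < A := mul_pos hm₁pos hx0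
  have hA1 : A < 1 := by nlinarith
  -- Piece 2 : logistic on [τ₁, τ₂]
  set D₁ := 1 + A * (m₂ - 1) with hD₁
  have hD₁pos : 0 < D₁ := by nlinarith
  have hstep2 : u τ₂ * D₁ = A * m₂ := by
    have := riccati_solve (u := u) (ρ := fun t => 1 + A * (Real.exp (t - τ₁) - 1))
      (a := τ₁) (b := τ₂) (α := 1) (β := 1) (c := A) hτ₁₂.le
      (fun t ht => by convert hu2 t ht using 1; ring) hstep1 (by simp)
      (fun t => by
        have hinner : HasDerivAt (fun t : ℝ => t - τ₁) 1 t := (hasDerivAt_id t).sub_const τ₁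
        have h1 : HasDerivAt (fun t : ℝ => Real.exp (t - τ₁)) (Real.exp (t - τ₁)) t := by
          simpa using hinner.exp
        have h2 := ((h1.sub_const 1).const_mul A).const_add 1
        refine h2.congr_deriv ?_
        simp [mul_comm])
      τ₂ (right_mem_Icc.mpr hτ₁₂.le)
    simpa [hD₁, hm₂, one_mul] using this
  set B := A * m₂ / D₁ with hB
  have hB0 : 0 < B := div_pos (mul_pos hA0 (by linarith)) hD₁pos
  have huτ₂ : u τ₂ = B := by
    rw [hB, eq_div_iff hD₁pos.ne']
    exact hstep2
  -- Piece 3 : u' = -u² on [τ₂, T]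
  set D₂ := 1 + B * (T - τ₂) with hD₂
  have hD₂pos : 0 < D₂ := by nlinarith
  have hstep3 : u T * D₂ = B := by
    have := riccati_solve (u := u) (ρ := fun t => 1 + B * (t - τ₂))
      (a := τ₂) (b := T) (α := 0) (β := 1) (c := B) hτ₂T
      (fun t ht => by convert hu3 t ht using 1; ring) huτ₂ (by simp)
      (fun t => by
        have hinner : HasDerivAt (fun t : ℝ => t - τ₂) 1 t := (hasDerivAt_id t).sub_const τ₂
        have h2 := (hinner.const_mul B).const_add 1
        refine h2.congr_deriv ?_
        simp)
      T (right_mem_Icc.mpr hτ₂T)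
    simpa [hD₂] using this
  have huT : u T = B / D₂ := by
    rw [eq_div_iff hD₂pos.ne']
    exact hstep3
  -- the target denominator factors as D₁ * D₂
  have hfact : m₁ * m₂ * (T - τ₂) * x + m₁ * (m₂ - 1) * x + 1 = D₁ * D₂ := by
    rw [hD₁, hD₂, hB, hA]
    field_simp
    ring
  have hDpos : 0 < m₁ * m₂ * (T - τ₂) * x + m₁ * (m₂ - 1) * x + 1 := by
    rw [hfact]; exact mul_pos hD₁pos hD₂pos
  have hmain : u T = m₁ * m₂ * x / (m₁ * m₂ * (T - τ₂) * x + m₁ * (m₂ - 1) * x + 1) := by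
    rw [huT, hfact, hB, hA, div_div]
    congr 1
    ring
  refine ⟨hmain, fun hle => ?_⟩
  rw [hmain]
  rw [div_lt_iff₀ hDpos]
  nlinarith [mul_nonneg (mul_nonneg (mul_nonneg (mul_nonneg hm₁pos.le
      (by linarith : (0:ℝ) ≤ m₂)) (by linarith : (0:ℝ) ≤ T - τ₂)) hx0.le) hx0.le,
    mul_pos (mul_pos hx0 hx0) (by linarith : (0:ℝ) < 1 - m₁),
    mul_nonneg (mul_nonneg (by linarith : (0:ℝ) ≤ 1 - m₁ * m₂)
      (by linarith : (0:ℝ) ≤ 1 - x)) hx0.le]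
end

section
/- Integral identity for a T-periodic solution: if u* is a positive T-periodic solution of the piecewise system u'=-d₁u on (0,τ₁], u'=u(1-u) on (τ₁,τ₂], u'=u(1-u)-c₁u on (τ₂,T], with phases u₁*, u₂*, u₃*, then ∫₀^{τ₂-τ₁} u₂*(t) dt + ∫₀^{T-τ₂} u₃*(t) dt = (1-c₁)T + c₁τ₂ - (1+d₁)τ₁. -/
open Real Set

lemma log_integral_key (a b : ℝ) (hab : a ≤ b) (u F : ℝ → ℝ)
    (hpos : ∀ t ∈ Icc a b, 0 < u t)
    (hF : ContinuousOn F (Icc a b))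
    (hu : ∀ t ∈ Icc a b, HasDerivWithinAt u (F t * u t) (Icc a b) t) :
    ∫ t in a..b, F t = Real.log (u b) - Real.log (u a) := by
  have hcu : ContinuousOn u (Icc a b) := fun t ht => (hu t ht).continuousWithinAt
  have hclog : ContinuousOn (fun t => Real.log (u t)) (Icc a b) := by
    apply ContinuousOn.log hcu
    intro t ht; exact (hpos t ht).ne'
  have hderiv : ∀ t ∈ Ioo a b,
      HasDerivWithinAt (fun t => Real.log (u t)) (F t) (Ioi t) t := by
    intro t ht
    have htm : t ∈ Icc a b := Ioo_subset_Icc_self ht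
    have hmem : Icc a b ∈ nhds t := Icc_mem_nhds ht.1 ht.2
    have hd : HasDerivAt u (F t * u t) t := (hu t htm).hasDerivAt hmem
    have := hd.log (hpos t htm).ne'
    have heq : F t * u t / u t = F t := by
      rw [mul_div_assoc, div_self (hpos t htm).ne', mul_one]
    rw [heq] at this
    exact this.hasDerivWithinAt
  have := intervalIntegral.integral_eq_sub_of_hasDeriv_right_of_le hab hclog hderiv
    (hF.intervalIntegrable_of_Icc hab)
  exact this

/-- Integral identity for a positive T-periodic solution of the three-season
single-species system: ∫₀^{τ₂-τ₁} u₂*(t) dt + ∫₀^{T-τ₂} u₃*(t) dt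
= (1-c₁)T + c₁τ₂ - (1+d₁)τ₁. -/
theorem stmt_16 (d₁ c₁ τ₁ τ₂ T : ℝ) (hd : 0 < d₁) (hc : 0 < c₁)
    (h1 : 0 < τ₁) (h2 : τ₁ < τ₂) (h3 : τ₂ < T)
    (u : ℝ → ℝ) (hpos : ∀ t ∈ Icc (0:ℝ) T, 0 < u t) (hper : u T = u 0)
    (hu1 : ∀ t ∈ Icc (0:ℝ) τ₁, HasDerivWithinAt u (-d₁ * u t) (Icc (0:ℝ) τ₁) t)
    (hu2 : ∀ t ∈ Icc τ₁ τ₂, HasDerivWithinAt u (u t * (1 - u t)) (Icc τ₁ τ₂) t)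
    (hu3 : ∀ t ∈ Icc τ₂ T,
      HasDerivWithinAt u (u t * (1 - u t) - c₁ * u t) (Icc τ₂ T) t) :
    (∫ t in (0:ℝ)..(τ₂ - τ₁), u (τ₁ + t)) + (∫ t in (0:ℝ)..(T - τ₂), u (τ₂ + t))
      = (1 - c₁) * T + c₁ * τ₂ - (1 + d₁) * τ₁ := by
  have h01 : (0:ℝ) ≤ τ₁ := h1.le
  have h12 : τ₁ ≤ τ₂ := h2.le
  have h23 : τ₂ ≤ T := h3.le
  have sub1 : Icc (0:ℝ) τ₁ ⊆ Icc (0:ℝ) T := Icc_subset_Icc le_rfl (h12.trans h23)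
  have sub2 : Icc τ₁ τ₂ ⊆ Icc (0:ℝ) T := Icc_subset_Icc h01 h23
  have sub3 : Icc τ₂ T ⊆ Icc (0:ℝ) T := Icc_subset_Icc (h01.trans h12) le_rfl
  have hcu2 : ContinuousOn u (Icc τ₁ τ₂) := fun t ht => (hu2 t ht).continuousWithinAt
  have hcu3 : ContinuousOn u (Icc τ₂ T) := fun t ht => (hu3 t ht).continuousWithinAt
  -- phase 1
  have E1 : ∫ t in (0:ℝ)..τ₁, (-d₁ : ℝ) = Real.log (u τ₁) - Real.log (u 0) := by
    apply log_integral_key 0 τ₁ h01 u (fun _ => -d₁) (fun t ht => hpos t (sub1 ht))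
      continuousOn_const
    intro t ht; exact hu1 t ht
  -- phase 2
  have E2 : ∫ t in τ₁..τ₂, (1 - u t) = Real.log (u τ₂) - Real.log (u τ₁) := by
    apply log_integral_key τ₁ τ₂ h12 u (fun t => 1 - u t) (fun t ht => hpos t (sub2 ht))
      (continuousOn_const.sub hcu2)
    intro t ht
    have := hu2 t ht
    have heq : u t * (1 - u t) = (1 - u t) * u t := by ring
    rwa [heq] at this
  -- phase 3
  have E3 : ∫ t in τ₂..T, (1 - u t - c₁) = Real.log (u T) - Real.log (u τ₂) := by
    apply log_integral_key τ₂ T h23 u (fun t => 1 - u t - c₁) (fun t ht => hpos t (sub3 ht))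
      ((continuousOn_const.sub hcu3).sub continuousOn_const)
    intro t ht
    have := hu3 t ht
    have heq : u t * (1 - u t) - c₁ * u t = (1 - u t - c₁) * u t := by ring
    rwa [heq] at this
  -- evaluate the simple parts
  have I1 : ∫ t in (0:ℝ)..τ₁, (-d₁ : ℝ) = -d₁ * τ₁ := by
    simp [mul_comm]
  have hint2 : IntervalIntegrable u MeasureTheory.volume τ₁ τ₂ :=
    hcu2.intervalIntegrable_of_Icc h12
  have hint3 : IntervalIntegrable u MeasureTheory.volume τ₂ T :=
    hcu3.intervalIntegrable_of_Icc h23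
  have I2 : ∫ t in τ₁..τ₂, (1 - u t) = (τ₂ - τ₁) - ∫ t in τ₁..τ₂, u t := by
    rw [intervalIntegral.integral_sub intervalIntegrable_const hint2]
    simp
  have I3 : ∫ t in τ₂..T, (1 - u t - c₁) = (1 - c₁) * (T - τ₂) - ∫ t in τ₂..T, u t := by
    have : (fun t => 1 - u t - c₁) = fun t => (1 - c₁) - u t := by funext t; ring
    rw [this, intervalIntegral.integral_sub intervalIntegrable_const hint3]
    simp
    ring
  -- shift the integrals
  have S1 : (∫ t in (0:ℝ)..(τ₂ - τ₁), u (τ₁ + t)) = ∫ t in τ₁..τ₂, u t := by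
    rw [intervalIntegral.integral_comp_add_left u τ₁]
    norm_num
  have S2 : (∫ t in (0:ℝ)..(T - τ₂), u (τ₂ + t)) = ∫ t in τ₂..T, u t := by
    rw [intervalIntegral.integral_comp_add_left u τ₂]
    norm_num
  rw [S1, S2]
  have hsum : (-d₁ * τ₁) + ((τ₂ - τ₁) - ∫ t in τ₁..τ₂, u t)
      + ((1 - c₁) * (T - τ₂) - ∫ t in τ₂..T, u t) = 0 := by
    rw [← I1, ← I2, ← I3, E1, E2, E3, hper]; ring
  linarith [hsum]
end

section
/- Eigenvalue formula at the semi-trivial periodic solution: under the integral identity ∫₀^{τ₂-τ₁}u₂* + ∫₀^{T-τ₂}u₃* = (1-c₁)T + c₁τ₂ - (1+d₁)τ₁, the Floquet multiplier λ₂ = e^{-d₂τ₁}·e^{∫₀^{τ₂-τ₁} r(1-b₂u₂*(t))dt}·e^{∫₀^{T-τ₂}(r(1-b₂u₃*(t))-c₂)dt} equals e^{c₂(τ₂-τ₂**) - r b₂ c₁(τ₂-τ₂*)}, where τ₂* = ((d₁+1)τ₁+(c₁-1)T)/c₁ and τ₂** = ((d₂+r)τ₁+(c₂-r)T)/c₂.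 In particular λ₂ < 1 if and only if c₂(τ₂-τ₂**) < r b₂ c₁(τ₂-τ₂*). -/
open Real Set

/-- Floquet multiplier formula at the semi-trivial periodic solution: under the
integral identity for u₂*, u₃*, the multiplier
λ₂ = e^{-d₂τ₁}·e^{∫r(1-b₂u₂*)}·e^{∫(r(1-b₂u₃*)-c₂)} equals
e^{c₂(τ₂-τ₂**) - r b₂ c₁ (τ₂-τ₂*)}, and λ₂ < 1 iff c₂(τ₂-τ₂**) < r b₂ c₁ (τ₂-τ₂*). -/
theorem stmt_17 (d₁ d₂ c₁ c₂ r b₂ τ₁ τ₂ T : ℝ)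
    (hd₁ : 0 < d₁) (hd₂ : 0 < d₂) (hc₁ : 0 < c₁) (hc₂ : 0 < c₂)
    (hr : 0 < r) (hb₂ : 0 < b₂) (h1 : 0 < τ₁) (h2 : τ₁ < τ₂) (h3 : τ₂ < T)
    (u₂ u₃ : ℝ → ℝ)
    (hcu₂ : ContinuousOn u₂ (Icc 0 (τ₂ - τ₁)))
    (hcu₃ : ContinuousOn u₃ (Icc 0 (T - τ₂)))
    (hid : (∫ t in (0:ℝ)..(τ₂ - τ₁), u₂ t) + (∫ t in (0:ℝ)..(T - τ₂), u₃ t)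
      = (1 - c₁) * T + c₁ * τ₂ - (1 + d₁) * τ₁) :
    Real.exp (-d₂ * τ₁) * Real.exp (∫ t in (0:ℝ)..(τ₂ - τ₁), r * (1 - b₂ * u₂ t)) *
        Real.exp (∫ t in (0:ℝ)..(T - τ₂), (r * (1 - b₂ * u₃ t) - c₂))
      = Real.exp (c₂ * (τ₂ - ((d₂ + r) * τ₁ + (c₂ - r) * T) / c₂)
          - r * b₂ * c₁ * (τ₂ - ((d₁ + 1) * τ₁ + (c₁ - 1) * T) / c₁)) ∧
    (Real.exp (-d₂ * τ₁) * Real.exp (∫ t in (0:ℝ)..(τ₂ - τ₁), r * (1 - b₂ * u₂ t)) *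
        Real.exp (∫ t in (0:ℝ)..(T - τ₂), (r * (1 - b₂ * u₃ t) - c₂)) < 1 ↔
      c₂ * (τ₂ - ((d₂ + r) * τ₁ + (c₂ - r) * T) / c₂)
        < r * b₂ * c₁ * (τ₂ - ((d₁ + 1) * τ₁ + (c₁ - 1) * T) / c₁)) := by
  have hle2 : (0:ℝ) ≤ τ₂ - τ₁ := by linarith
  have hle3 : (0:ℝ) ≤ T - τ₂ := by linarith
  have hI2 : IntervalIntegrable u₂ MeasureTheory.volume 0 (τ₂ - τ₁) := by
    apply ContinuousOn.intervalIntegrable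
    rwa [uIcc_of_le hle2]
  have hI3 : IntervalIntegrable u₃ MeasureTheory.volume 0 (T - τ₂) := by
    apply ContinuousOn.intervalIntegrable
    rwa [uIcc_of_le hle3]
  have e2 : (∫ t in (0:ℝ)..(τ₂ - τ₁), r * (1 - b₂ * u₂ t))
      = r * (τ₂ - τ₁) - r * b₂ * (∫ t in (0:ℝ)..(τ₂ - τ₁), u₂ t) := by
    have : (fun t => r * (1 - b₂ * u₂ t)) = fun t => r - (r * b₂) * u₂ t := by
      funext t; ring
    rw [this, intervalIntegral.integral_sub intervalIntegrable_const (hI2.const_mul _),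
      intervalIntegral.integral_const, intervalIntegral.integral_const_mul, smul_eq_mul]
    ring
  have e3 : (∫ t in (0:ℝ)..(T - τ₂), (r * (1 - b₂ * u₃ t) - c₂))
      = (r - c₂) * (T - τ₂) - r * b₂ * (∫ t in (0:ℝ)..(T - τ₂), u₃ t) := by
    have : (fun t => r * (1 - b₂ * u₃ t) - c₂) = fun t => (r - c₂) - (r * b₂) * u₃ t := by
      funext t; ring
    rw [this, intervalIntegral.integral_sub intervalIntegrable_const (hI3.const_mul _),
      intervalIntegral.integral_const, intervalIntegral.integral_const_mul, smul_eq_mul]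
    ring
  have hexp : -d₂ * τ₁ + ((∫ t in (0:ℝ)..(τ₂ - τ₁), r * (1 - b₂ * u₂ t))
      + (∫ t in (0:ℝ)..(T - τ₂), (r * (1 - b₂ * u₃ t) - c₂)))
      = c₂ * (τ₂ - ((d₂ + r) * τ₁ + (c₂ - r) * T) / c₂)
        - r * b₂ * c₁ * (τ₂ - ((d₁ + 1) * τ₁ + (c₁ - 1) * T) / c₁) := by
    have g1 : c₂ * (τ₂ - ((d₂ + r) * τ₁ + (c₂ - r) * T) / c₂)
        = c₂ * τ₂ - ((d₂ + r) * τ₁ + (c₂ - r) * T) := by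
      field_simp
    have g2 : r * b₂ * c₁ * (τ₂ - ((d₁ + 1) * τ₁ + (c₁ - 1) * T) / c₁)
        = r * b₂ * (c₁ * τ₂ - ((d₁ + 1) * τ₁ + (c₁ - 1) * T)) := by
      field_simp
    rw [e2, e3, g1, g2]
    linear_combination (-(r * b₂)) * hid
  rw [← Real.exp_add, ← Real.exp_add, add_assoc, hexp]
  exact ⟨rfl, by rw [Real.exp_lt_one_iff]; constructor <;> intro h <;> linarith⟩
end

section
/- Nonexistence of interior periodic solutions when τ₂ < τ₂**: if (ū, v̄) is a positive T-periodic solution of the two-species seasonal system, then summing the logarithmic-derivative integrals of the v-equation over the three seasons yields ∫₀^{τ₂-τ₁} r(v̄₂ + b₂ū₂) dt + ∫₀^{T-τ₂} r(v̄₃ + b₂ū₃) dt = c₂(τ₂ - τ₂**), where τ₂** = ((d₂+r)τ₁+(c₂-r)T)/c₂. Consequently, if τ₂ < τ₂** then no positive T-periodic solution exists (since the left side is positive). -/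
open Real Set

lemma log_ftc (a b : ℝ) (hab : a ≤ b) (v G : ℝ → ℝ)
    (hv : ∀ t ∈ Icc a b, 0 < v t)
    (hG : ContinuousOn G (Icc a b))
    (hd : ∀ t ∈ Icc a b, HasDerivWithinAt v (G t * v t) (Icc a b) t) :
    ∫ t in a..b, G t = Real.log (v b) - Real.log (v a) := by
  have hvc : ContinuousOn v (Icc a b) := fun t ht => (hd t ht).continuousWithinAt
  have hcont : ContinuousOn (fun t => Real.log (v t)) (Icc a b) := by
    apply ContinuousOn.log hvc
    intro t ht; exact (hv t ht).ne'
  have hderiv : ∀ x ∈ Ioo a b,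
      HasDerivWithinAt (fun t => Real.log (v t)) (G x) (Ioi x) x := by
    intro x hx
    have hmem : Icc a b ∈ nhds x := Icc_mem_nhds hx.1 hx.2
    have hdx : HasDerivAt v (G x * v x) x := (hd x (Ioo_subset_Icc_self hx)).hasDerivAt hmem
    have := hdx.log (hv x (Ioo_subset_Icc_self hx)).ne'
    have heq : G x * v x / v x = G x :=
      mul_div_cancel_right₀ (G x) (hv x (Ioo_subset_Icc_self hx)).ne'
    rw [heq] at this
    exact this.hasDerivWithinAt
  exact intervalIntegral.integral_eq_sub_of_hasDeriv_right_of_le hab hcont hderiv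
    (hG.intervalIntegrable_of_Icc hab)

/-- If (ū, v̄) is a positive T-periodic solution of the two-species seasonal
system, then ∫₀^{τ₂-τ₁} r(v̄₂+b₂ū₂) + ∫₀^{T-τ₂} r(v̄₃+b₂ū₃) = c₂(τ₂-τ₂**);
consequently τ₂ > τ₂**, so if τ₂ < τ₂** no positive T-periodic solution exists. -/
theorem stmt_18 (d₁ d₂ r b₁ b₂ c₁ c₂ τ₁ τ₂ T : ℝ)
    (hd₁ : 0 < d₁) (hd₂ : 0 < d₂) (hr : 0 < r) (hb₁ : 0 < b₁) (hb₂ : 0 < b₂)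
    (hc₁ : 0 < c₁) (hc₂ : 0 < c₂) (h1 : 0 < τ₁) (h2 : τ₁ < τ₂) (h3 : τ₂ < T)
    (u v : ℝ → ℝ)
    (hupos : ∀ t ∈ Icc (0:ℝ) T, 0 < u t) (hvpos : ∀ t ∈ Icc (0:ℝ) T, 0 < v t)
    (huper : u T = u 0) (hvper : v T = v 0)
    (hu1 : ∀ t ∈ Icc (0:ℝ) τ₁, HasDerivWithinAt u (-d₁ * u t) (Icc (0:ℝ) τ₁) t)
    (hv1 : ∀ t ∈ Icc (0:ℝ) τ₁, HasDerivWithinAt v (-d₂ * v t) (Icc (0:ℝ) τ₁) t)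
    (hu2 : ∀ t ∈ Icc τ₁ τ₂,
      HasDerivWithinAt u (u t * (1 - u t - b₁ * v t)) (Icc τ₁ τ₂) t)
    (hv2 : ∀ t ∈ Icc τ₁ τ₂,
      HasDerivWithinAt v (r * v t * (1 - v t - b₂ * u t)) (Icc τ₁ τ₂) t)
    (hu3 : ∀ t ∈ Icc τ₂ T,
      HasDerivWithinAt u (u t * (1 - u t - b₁ * v t) - c₁ * u t) (Icc τ₂ T) t)
    (hv3 : ∀ t ∈ Icc τ₂ T,
      HasDerivWithinAt v (r * v t * (1 - v t - b₂ * u t) - c₂ * v t) (Icc τ₂ T) t) :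
    (∫ t in (0:ℝ)..(τ₂ - τ₁), r * (v (τ₁ + t) + b₂ * u (τ₁ + t))) +
        (∫ t in (0:ℝ)..(T - τ₂), r * (v (τ₂ + t) + b₂ * u (τ₂ + t)))
      = c₂ * (τ₂ - ((d₂ + r) * τ₁ + (c₂ - r) * T) / c₂) ∧
    ((d₂ + r) * τ₁ + (c₂ - r) * T) / c₂ < τ₂ := by
  have hsub1 : Icc (0:ℝ) τ₁ ⊆ Icc 0 T := Icc_subset_Icc le_rfl (by linarith)
  have hsub2 : Icc τ₁ τ₂ ⊆ Icc 0 T := Icc_subset_Icc (by linarith) (by linarith)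
  have hsub3 : Icc τ₂ T ⊆ Icc 0 T := Icc_subset_Icc (by linarith) le_rfl
  -- continuity of u, v on seasons 2 and 3
  have hvc2 : ContinuousOn v (Icc τ₁ τ₂) := fun t ht => (hv2 t ht).continuousWithinAt
  have huc2 : ContinuousOn u (Icc τ₁ τ₂) := fun t ht => (hu2 t ht).continuousWithinAt
  have hvc3 : ContinuousOn v (Icc τ₂ T) := fun t ht => (hv3 t ht).continuousWithinAt
  have huc3 : ContinuousOn u (Icc τ₂ T) := fun t ht => (hu3 t ht).continuousWithinAt
  -- FTC on each season
  have E1 : ∫ t in (0:ℝ)..τ₁, (fun _ : ℝ => -d₂) t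
      = Real.log (v τ₁) - Real.log (v 0) := by
    apply log_ftc 0 τ₁ h1.le v _ (fun t ht => hvpos t (hsub1 ht)) continuousOn_const
    intro t ht
    exact hv1 t ht
  have E2 : ∫ t in τ₁..τ₂, (fun t => r * (1 - v t - b₂ * u t)) t
      = Real.log (v τ₂) - Real.log (v τ₁) := by
    apply log_ftc τ₁ τ₂ h2.le v _ (fun t ht => hvpos t (hsub2 ht))
    · exact continuousOn_const.mul ((continuousOn_const.sub hvc2).sub
        (continuousOn_const.mul huc2))
    · intro t ht
      have := hv2 t ht
      convert this using 1
      ring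
  have E3 : ∫ t in τ₂..T, (fun t => r * (1 - v t - b₂ * u t) - c₂) t
      = Real.log (v T) - Real.log (v τ₂) := by
    apply log_ftc τ₂ T h3.le v _ (fun t ht => hvpos t (hsub3 ht))
    · exact (continuousOn_const.mul ((continuousOn_const.sub hvc3).sub
        (continuousOn_const.mul huc3))).sub continuousOn_const
    · intro t ht
      have := hv3 t ht
      convert this using 1
      ring
  -- rewrite integrals
  have hI1c : ContinuousOn (fun t => r * (v t + b₂ * u t)) (Icc τ₁ τ₂) :=
    continuousOn_const.mul (hvc2.add (continuousOn_const.mul huc2))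
  have hI2c : ContinuousOn (fun t => r * (v t + b₂ * u t)) (Icc τ₂ T) :=
    continuousOn_const.mul (hvc3.add (continuousOn_const.mul huc3))
  have hI1int : IntervalIntegrable (fun t => r * (v t + b₂ * u t)) MeasureTheory.volume τ₁ τ₂ :=
    hI1c.intervalIntegrable_of_Icc h2.le
  have hI2int : IntervalIntegrable (fun t => r * (v t + b₂ * u t)) MeasureTheory.volume τ₂ T :=
    hI2c.intervalIntegrable_of_Icc h3.le
  set I₁ := ∫ t in τ₁..τ₂, r * (v t + b₂ * u t) with hI₁
  set I₂ := ∫ t in τ₂..T, r * (v t + b₂ * u t) with hI₂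
  have split2 : ∫ t in τ₁..τ₂, (fun t => r * (1 - v t - b₂ * u t)) t
      = r * (τ₂ - τ₁) - I₁ := by
    have h : (fun t => r * (1 - v t - b₂ * u t))
        = fun t => r - r * (v t + b₂ * u t) := by funext t; ring
    rw [h, intervalIntegral.integral_sub intervalIntegrable_const hI1int,
      intervalIntegral.integral_const, smul_eq_mul, hI₁]
    ring
  have split3 : ∫ t in τ₂..T, (fun t => r * (1 - v t - b₂ * u t) - c₂) t
      = (r - c₂) * (T - τ₂) - I₂ := by
    have h : (fun t => r * (1 - v t - b₂ * u t) - c₂)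
        = fun t => (r - c₂) - r * (v t + b₂ * u t) := by funext t; ring
    rw [h, intervalIntegral.integral_sub intervalIntegrable_const hI2int,
      intervalIntegral.integral_const, smul_eq_mul, hI₂]
    ring
  have hE2' : r * (τ₂ - τ₁) - I₁ = Real.log (v τ₂) - Real.log (v τ₁) := by
    rw [← split2]; exact E2
  have hE3' : (r - c₂) * (T - τ₂) - I₂ = Real.log (v T) - Real.log (v τ₂) := by
    rw [← split3]; exact E3
  have hE1' : -d₂ * τ₁ = Real.log (v τ₁) - Real.log (v 0) := by
    rw [← E1]; simp; ring
  have hsum : I₁ + I₂ = c₂ * τ₂ - ((d₂ + r) * τ₁ + (c₂ - r) * T) := by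
    have hTv : Real.log (v T) = Real.log (v 0) := by rw [hvper]
    nlinarith [hE1', hE2', hE3']
  -- positivity of I₁, I₂
  have hI1pos : 0 < I₁ := by
    apply intervalIntegral.intervalIntegral_pos_of_pos_on hI1int _ h2
    intro x hx
    have hx' : x ∈ Icc τ₁ τ₂ := Ioo_subset_Icc_self hx
    have := hvpos x (hsub2 hx'); have := hupos x (hsub2 hx')
    positivity
  have hI2pos : 0 < I₂ := by
    apply intervalIntegral.intervalIntegral_pos_of_pos_on hI2int _ h3
    intro x hx
    have hx' : x ∈ Icc τ₂ T := Ioo_subset_Icc_self hx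
    have := hvpos x (hsub3 hx'); have := hupos x (hsub3 hx')
    positivity
  -- translate the target integrals
  have ht1 : (∫ t in (0:ℝ)..(τ₂ - τ₁), r * (v (τ₁ + t) + b₂ * u (τ₁ + t))) = I₁ := by
    rw [hI₁]
    have := intervalIntegral.integral_comp_add_left
      (a := (0:ℝ)) (b := τ₂ - τ₁) (fun t => r * (v t + b₂ * u t)) τ₁
    simpa using this
  have ht2 : (∫ t in (0:ℝ)..(T - τ₂), r * (v (τ₂ + t) + b₂ * u (τ₂ + t))) = I₂ := by
    rw [hI₂]
    have := intervalIntegral.integral_comp_add_left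
      (a := (0:ℝ)) (b := T - τ₂) (fun t => r * (v t + b₂ * u t)) τ₂
    simpa using this
  have hkey : c₂ * (τ₂ - ((d₂ + r) * τ₁ + (c₂ - r) * T) / c₂)
      = c₂ * τ₂ - ((d₂ + r) * τ₁ + (c₂ - r) * T) := by
    field_simp
  constructor
  · rw [ht1, ht2, hkey, hsum]
  · have : 0 < c₂ * (τ₂ - ((d₂ + r) * τ₁ + (c₂ - r) * T) / c₂) := by
      rw [hkey, ← hsum]; linarith
    nlinarith [this]
end

section
/- Uniqueness of the coexistence average: any two positive T-periodic solutions (ū,v̄) and (ũ,ṽ) of the two-species seasonal system with b₁b₂ ≠ 1 satisfy ∫₀^{τ₂-τ₁}ū₂ + ∫₀^{T-τ₂}ū₃ = ∫₀^{τ₂-τ₁}ũ₂ + ∫₀^{T-τ₂}ũ₃, both equal to [r((1-c₁)T + c₁τ₂ - (1+d₁)τ₁) - b₁((r-c₂)T + c₂τ₂ - (r+d₂)τ₁)] / (r(1-b₁b₂)), obtained by taking the r-weighted difference of the two logarithmic integral identities. -/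
open Real Set

lemma log_int {f g : ℝ → ℝ} {a b : ℝ} (hab : a ≤ b)
    (hf : ∀ t ∈ Icc a b, HasDerivWithinAt f (f t * g t) (Icc a b) t)
    (hpos : ∀ t ∈ Icc a b, 0 < f t)
    (hg : ContinuousOn g (Icc a b)) :
    ∫ t in a..b, g t = Real.log (f b) - Real.log (f a) := by
  have hfc : ContinuousOn f (Icc a b) := fun t ht => (hf t ht).continuousWithinAt
  have hcont : ContinuousOn (fun t => Real.log (f t)) (Icc a b) :=
    hfc.log (fun t ht => (hpos t ht).ne')
  have hderiv : ∀ t ∈ Ioo a b, HasDerivWithinAt (fun t => Real.log (f t)) (g t) (Ioi t) t := by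
    intro t ht
    have h1 : HasDerivAt f (f t * g t) t :=
      (hf t (Ioo_subset_Icc_self ht)).hasDerivAt (Icc_mem_nhds ht.1 ht.2)
    have hne : f t ≠ 0 := (hpos t (Ioo_subset_Icc_self ht)).ne'
    have := h1.log hne
    rw [mul_div_cancel_left₀ _ hne] at this
    exact this.hasDerivWithinAt
  have hint : IntervalIntegrable g MeasureTheory.volume a b :=
    hg.intervalIntegrable_of_Icc hab
  exact intervalIntegral.integral_eq_sub_of_hasDeriv_right_of_le hab hcont hderiv hint

lemma coexist_avg (d₁ d₂ r b₁ b₂ c₁ c₂ τ₁ τ₂ T : ℝ)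
    (hr : 0 < r) (hbb : b₁ * b₂ ≠ 1)
    (h1 : 0 < τ₁) (h2 : τ₁ < τ₂) (h3 : τ₂ < T)
    (u v : ℝ → ℝ)
    (hupos : ∀ t ∈ Icc (0:ℝ) T, 0 < u t) (hvpos : ∀ t ∈ Icc (0:ℝ) T, 0 < v t)
    (huper : u T = u 0) (hvper : v T = v 0)
    (hu1 : ∀ t ∈ Icc (0:ℝ) τ₁, HasDerivWithinAt u (-d₁ * u t) (Icc (0:ℝ) τ₁) t)
    (hv1 : ∀ t ∈ Icc (0:ℝ) τ₁, HasDerivWithinAt v (-d₂ * v t) (Icc (0:ℝ) τ₁) t)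
    (hu2 : ∀ t ∈ Icc τ₁ τ₂,
      HasDerivWithinAt u (u t * (1 - u t - b₁ * v t)) (Icc τ₁ τ₂) t)
    (hv2 : ∀ t ∈ Icc τ₁ τ₂,
      HasDerivWithinAt v (r * v t * (1 - v t - b₂ * u t)) (Icc τ₁ τ₂) t)
    (hu3 : ∀ t ∈ Icc τ₂ T,
      HasDerivWithinAt u (u t * (1 - u t - b₁ * v t) - c₁ * u t) (Icc τ₂ T) t)
    (hv3 : ∀ t ∈ Icc τ₂ T,
      HasDerivWithinAt v (r * v t * (1 - v t - b₂ * u t) - c₂ * v t) (Icc τ₂ T) t) :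
    (∫ t in τ₁..τ₂, u t) + (∫ t in τ₂..T, u t)
      = (r * ((1 - c₁) * T + c₁ * τ₂ - (1 + d₁) * τ₁)
          - b₁ * ((r - c₂) * T + c₂ * τ₂ - (r + d₂) * τ₁)) / (r * (1 - b₁ * b₂)) := by
  have hsub1 : Icc (0:ℝ) τ₁ ⊆ Icc (0:ℝ) T := Icc_subset_Icc le_rfl (by linarith)
  have hsub2 : Icc τ₁ τ₂ ⊆ Icc (0:ℝ) T := Icc_subset_Icc h1.le (by linarith)
  have hsub3 : Icc τ₂ T ⊆ Icc (0:ℝ) T := Icc_subset_Icc (by linarith) le_rfl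
  -- continuity
  have huc2 : ContinuousOn u (Icc τ₁ τ₂) := fun t ht => (hu2 t ht).continuousWithinAt
  have hvc2 : ContinuousOn v (Icc τ₁ τ₂) := fun t ht => (hv2 t ht).continuousWithinAt
  have huc3 : ContinuousOn u (Icc τ₂ T) := fun t ht => (hu3 t ht).continuousWithinAt
  have hvc3 : ContinuousOn v (Icc τ₂ T) := fun t ht => (hv3 t ht).continuousWithinAt
  have iu2 : IntervalIntegrable u MeasureTheory.volume τ₁ τ₂ := huc2.intervalIntegrable_of_Icc h2.le
  have iv2 : IntervalIntegrable v MeasureTheory.volume τ₁ τ₂ := hvc2.intervalIntegrable_of_Icc h2.le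
  have iu3 : IntervalIntegrable u MeasureTheory.volume τ₂ T := huc3.intervalIntegrable_of_Icc h3.le
  have iv3 : IntervalIntegrable v MeasureTheory.volume τ₂ T := hvc3.intervalIntegrable_of_Icc h3.le
  -- season 1
  have E1u : -(τ₁ * d₁) = Real.log (u τ₁) - Real.log (u 0) := by
    have h := log_int (f := u) (g := fun _ => -d₁) h1.le
      (fun t ht => by simpa [mul_comm] using hu1 t ht)
      (fun t ht => hupos t (hsub1 ht))
      continuousOn_const
    simpa using h
  have E1v : -(τ₁ * d₂) = Real.log (v τ₁) - Real.log (v 0) := by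
    have h := log_int (f := v) (g := fun _ => -d₂) h1.le
      (fun t ht => by simpa [mul_comm] using hv1 t ht)
      (fun t ht => hvpos t (hsub1 ht))
      continuousOn_const
    simpa using h
  -- season 2
  have E2u : (∫ t in τ₁..τ₂, (1 - u t - b₁ * v t)) = Real.log (u τ₂) - Real.log (u τ₁) :=
    log_int h2.le hu2 (fun t ht => hupos t (hsub2 ht))
      (by fun_prop)
  have E2v : (∫ t in τ₁..τ₂, r * (1 - v t - b₂ * u t)) = Real.log (v τ₂) - Real.log (v τ₁) :=
    log_int h2.le (fun t ht => by
        have := hv2 t ht; convert this using 1; ring)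
      (fun t ht => hvpos t (hsub2 ht)) (by fun_prop)
  -- season 3
  have E3u : (∫ t in τ₂..T, (1 - u t - b₁ * v t - c₁)) = Real.log (u 0) - Real.log (u τ₂) := by
    rw [← huper]
    exact log_int h3.le (fun t ht => by
        have := hu3 t ht; convert this using 1; ring)
      (fun t ht => hupos t (hsub3 ht)) (by fun_prop)
  have E3v : (∫ t in τ₂..T, (r * (1 - v t - b₂ * u t) - c₂)) = Real.log (v 0) - Real.log (v τ₂) := by
    rw [← hvper]
    exact log_int h3.le (fun t ht => by
        have := hv3 t ht; convert this using 1; ring)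
      (fun t ht => hvpos t (hsub3 ht)) (by fun_prop)
  -- split the integrals
  have S2u : (∫ t in τ₁..τ₂, (1 - u t - b₁ * v t))
      = (τ₂ - τ₁) - (∫ t in τ₁..τ₂, u t) - b₁ * ∫ t in τ₁..τ₂, v t := by
    rw [intervalIntegral.integral_sub (intervalIntegrable_const.sub iu2) (iv2.const_mul b₁),
      intervalIntegral.integral_sub intervalIntegrable_const iu2,
      intervalIntegral.integral_const_mul, intervalIntegral.integral_const]
    simp [smul_eq_mul]
  have S2v : (∫ t in τ₁..τ₂, r * (1 - v t - b₂ * u t))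
      = r * ((τ₂ - τ₁) - (∫ t in τ₁..τ₂, v t) - b₂ * ∫ t in τ₁..τ₂, u t) := by
    rw [intervalIntegral.integral_const_mul,
      intervalIntegral.integral_sub (intervalIntegrable_const.sub iv2) (iu2.const_mul b₂),
      intervalIntegral.integral_sub intervalIntegrable_const iv2,
      intervalIntegral.integral_const_mul, intervalIntegral.integral_const]
    simp [smul_eq_mul]
  have S3u : (∫ t in τ₂..T, (1 - u t - b₁ * v t - c₁))
      = (1 - c₁) * (T - τ₂) - (∫ t in τ₂..T, u t) - b₁ * ∫ t in τ₂..T, v t := by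
    rw [intervalIntegral.integral_sub ((intervalIntegrable_const.sub iu3).sub (iv3.const_mul b₁)) intervalIntegrable_const,
      intervalIntegral.integral_sub (intervalIntegrable_const.sub iu3) (iv3.const_mul b₁),
      intervalIntegral.integral_sub intervalIntegrable_const iu3,
      intervalIntegral.integral_const_mul, intervalIntegral.integral_const, intervalIntegral.integral_const]
    simp [smul_eq_mul]; ring
  have S3v : (∫ t in τ₂..T, (r * (1 - v t - b₂ * u t) - c₂))
      = r * ((T - τ₂) - (∫ t in τ₂..T, v t) - b₂ * ∫ t in τ₂..T, u t) - c₂ * (T - τ₂) := by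
    rw [intervalIntegral.integral_sub (((intervalIntegrable_const.sub iv3).sub (iu3.const_mul b₂)).const_mul r) intervalIntegrable_const,
      intervalIntegral.integral_const_mul,
      intervalIntegral.integral_sub (intervalIntegrable_const.sub iv3) (iu3.const_mul b₂),
      intervalIntegral.integral_sub intervalIntegrable_const iv3,
      intervalIntegral.integral_const_mul, intervalIntegral.integral_const, intervalIntegral.integral_const]
    simp [smul_eq_mul]; ring
  rw [S2u] at E2u; rw [S2v] at E2v; rw [S3u] at E3u; rw [S3v] at E3v
  set U2 := ∫ t in τ₁..τ₂, u t
  set U3 := ∫ t in τ₂..T, u t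
  set V2 := ∫ t in τ₁..τ₂, v t
  set V3 := ∫ t in τ₂..T, v t
  have eq1 : (U2 + U3) + b₁ * (V2 + V3)
      = (1 - c₁) * T + c₁ * τ₂ - (1 + d₁) * τ₁ := by
    linear_combination (-1) * E1u - E2u - E3u
  have eq2 : r * (V2 + V3) + r * b₂ * (U2 + U3)
      = (r - c₂) * T + c₂ * τ₂ - (r + d₂) * τ₁ := by
    linear_combination (-1) * E1v - E2v - E3v
  have hden : r * (1 - b₁ * b₂) ≠ 0 := by
    have : (1 : ℝ) - b₁ * b₂ ≠ 0 := sub_ne_zero.mpr (Ne.symm hbb)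
    positivity
  field_simp
  linear_combination r * eq1 - b₁ * eq2


/-- Uniqueness of the coexistence average: any two positive T-periodic solutions
(ū,v̄) and (ũ,ṽ) of the two-species seasonal system with b₁b₂ ≠ 1 have u-integrals
over the growth and grazing seasons both equal to
[r((1-c₁)T + c₁τ₂ - (1+d₁)τ₁) - b₁((r-c₂)T + c₂τ₂ - (r+d₂)τ₁)] / (r(1-b₁b₂)). -/
theorem stmt_19 (d₁ d₂ r b₁ b₂ c₁ c₂ τ₁ τ₂ T : ℝ)
    (hd₁ : 0 < d₁) (hd₂ : 0 < d₂) (hr : 0 < r) (hb₁ : 0 < b₁) (hb₂ : 0 < b₂)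
    (hc₁ : 0 < c₁) (hc₂ : 0 < c₂) (hbb : b₁ * b₂ ≠ 1)
    (h1 : 0 < τ₁) (h2 : τ₁ < τ₂) (h3 : τ₂ < T)
    (u v u' v' : ℝ → ℝ)
    (hupos : ∀ t ∈ Icc (0:ℝ) T, 0 < u t) (hvpos : ∀ t ∈ Icc (0:ℝ) T, 0 < v t)
    (huper : u T = u 0) (hvper : v T = v 0)
    (hu1 : ∀ t ∈ Icc (0:ℝ) τ₁, HasDerivWithinAt u (-d₁ * u t) (Icc (0:ℝ) τ₁) t)
    (hv1 : ∀ t ∈ Icc (0:ℝ) τ₁, HasDerivWithinAt v (-d₂ * v t) (Icc (0:ℝ) τ₁) t)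
    (hu2 : ∀ t ∈ Icc τ₁ τ₂,
      HasDerivWithinAt u (u t * (1 - u t - b₁ * v t)) (Icc τ₁ τ₂) t)
    (hv2 : ∀ t ∈ Icc τ₁ τ₂,
      HasDerivWithinAt v (r * v t * (1 - v t - b₂ * u t)) (Icc τ₁ τ₂) t)
    (hu3 : ∀ t ∈ Icc τ₂ T,
      HasDerivWithinAt u (u t * (1 - u t - b₁ * v t) - c₁ * u t) (Icc τ₂ T) t)
    (hv3 : ∀ t ∈ Icc τ₂ T,
      HasDerivWithinAt v (r * v t * (1 - v t - b₂ * u t) - c₂ * v t) (Icc τ₂ T) t)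
    (hupos' : ∀ t ∈ Icc (0:ℝ) T, 0 < u' t) (hvpos' : ∀ t ∈ Icc (0:ℝ) T, 0 < v' t)
    (huper' : u' T = u' 0) (hvper' : v' T = v' 0)
    (hu1' : ∀ t ∈ Icc (0:ℝ) τ₁, HasDerivWithinAt u' (-d₁ * u' t) (Icc (0:ℝ) τ₁) t)
    (hv1' : ∀ t ∈ Icc (0:ℝ) τ₁, HasDerivWithinAt v' (-d₂ * v' t) (Icc (0:ℝ) τ₁) t)
    (hu2' : ∀ t ∈ Icc τ₁ τ₂,
      HasDerivWithinAt u' (u' t * (1 - u' t - b₁ * v' t)) (Icc τ₁ τ₂) t)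
    (hv2' : ∀ t ∈ Icc τ₁ τ₂,
      HasDerivWithinAt v' (r * v' t * (1 - v' t - b₂ * u' t)) (Icc τ₁ τ₂) t)
    (hu3' : ∀ t ∈ Icc τ₂ T,
      HasDerivWithinAt u' (u' t * (1 - u' t - b₁ * v' t) - c₁ * u' t) (Icc τ₂ T) t)
    (hv3' : ∀ t ∈ Icc τ₂ T,
      HasDerivWithinAt v' (r * v' t * (1 - v' t - b₂ * u' t) - c₂ * v' t) (Icc τ₂ T) t) :
    (∫ t in (0:ℝ)..(τ₂ - τ₁), u (τ₁ + t)) + (∫ t in (0:ℝ)..(T - τ₂), u (τ₂ + t))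
      = (r * ((1 - c₁) * T + c₁ * τ₂ - (1 + d₁) * τ₁)
          - b₁ * ((r - c₂) * T + c₂ * τ₂ - (r + d₂) * τ₁)) / (r * (1 - b₁ * b₂)) ∧
    (∫ t in (0:ℝ)..(τ₂ - τ₁), u' (τ₁ + t)) + (∫ t in (0:ℝ)..(T - τ₂), u' (τ₂ + t))
      = (r * ((1 - c₁) * T + c₁ * τ₂ - (1 + d₁) * τ₁)
          - b₁ * ((r - c₂) * T + c₂ * τ₂ - (r + d₂) * τ₁)) / (r * (1 - b₁ * b₂)) := by
  have hshift : ∀ w : ℝ → ℝ,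
      (∫ t in (0:ℝ)..(τ₂ - τ₁), w (τ₁ + t)) + (∫ t in (0:ℝ)..(T - τ₂), w (τ₂ + t))
        = (∫ t in τ₁..τ₂, w t) + (∫ t in τ₂..T, w t) := by
    intro w
    rw [intervalIntegral.integral_comp_add_left w τ₁, intervalIntegral.integral_comp_add_left w τ₂]
    norm_num
  constructor
  · rw [hshift u]
    exact coexist_avg d₁ d₂ r b₁ b₂ c₁ c₂ τ₁ τ₂ T hr hbb h1 h2 h3 u v hupos hvpos
      huper hvper hu1 hv1 hu2 hv2 hu3 hv3
  · rw [hshift u']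
    exact coexist_avg d₁ d₂ r b₁ b₂ c₁ c₂ τ₁ τ₂ T hr hbb h1 h2 h3 u' v' hupos' hvpos'
      huper' hvper' hu1' hv1' hu2' hv2' hu3' hv3'
end
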